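/- Let C̃ be a symmetric positive definite M×M matrix, and for α ∈ ℝ^M with A_α = C̃ + α1ᵀ + 1αᵀ positive definite, define v(α) = 1/(1ᵀA_α⁻¹1) and C_α = A_α − v(α)11ᵀ. Then the function α ↦ ‖C_α‖_F² has nonnegative Laplacian: Δ‖C_α‖_F² = Tr(Hess ‖C_α‖_F²) ≥ 0, with (1/4)Δ‖C_α‖_F² = M²(1 − v(α)Tr(A_α⁻¹)) + c(Tr(A_α⁻¹) − v(α)·1ᵀA_α⁻²1) + 3M(M·v(α)²·1ᵀA_α⁻²1 − 1) where c = 1ᵀC̃1, assuming Σαᵢ = 0. -/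

import Mathlib

open Matrix BigOperators

/-- `A_α = C̃ + α1ᵀ + 1αᵀ`. -/
noncomputable def Amat {M : ℕ} (Ct : Matrix (Fin M) (Fin M) ℝ) (α : Fin M → ℝ) :
    Matrix (Fin M) (Fin M) ℝ :=
  Ct + vecMulVec α (1 : Fin M → ℝ) + vecMulVec (1 : Fin M → ℝ) α

/-- `v(α) = 1/(1ᵀ A_α⁻¹ 1)`. -/
noncomputable def vfun {M : ℕ} (Ct : Matrix (Fin M) (Fin M) ℝ) (α : Fin M → ℝ) : ℝ :=
  1 / ((1 : Fin M → ℝ) ⬝ᵥ ((Amat Ct α)⁻¹ *ᵥ (1 : Fin M → ℝ)))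

/-- `C_α = A_α − v(α)·11ᵀ`. -/
noncomputable def Cmat {M : ℕ} (Ct : Matrix (Fin M) (Fin M) ℝ) (α : Fin M → ℝ) :
    Matrix (Fin M) (Fin M) ℝ :=
  Amat Ct α - vfun Ct α • vecMulVec (1 : Fin M → ℝ) (1 : Fin M → ℝ)

/-- Squared Frobenius norm `‖X‖_F² = Σᵢⱼ Xᵢⱼ²`. -/
noncomputable def frobSq {M : ℕ} (X : Matrix (Fin M) (Fin M) ℝ) : ℝ :=
  ∑ i, ∑ j, (X i j) ^ 2

/-- Partial derivative of a function of `α ∈ ℝ^M` in the `i`-th coordinate. -/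
noncomputable def pd {M : ℕ} (f : (Fin M → ℝ) → ℝ) (i : Fin M) (α : Fin M → ℝ) : ℝ :=
  deriv (fun t => f (Function.update α i t)) (α i)

-- ==== auxiliary development ====
namespace CShift

open Topology Filter

attribute [local instance] Matrix.linftyOpNormedRing Matrix.linftyOpNormedAlgebra

variable {M : ℕ}

noncomputable def Evec (i : Fin M) : Matrix (Fin M) (Fin M) ℝ :=
  vecMulVec (Pi.single i 1) (1 : Fin M → ℝ) + vecMulVec (1 : Fin M → ℝ) (Pi.single i 1)

lemma Evec_apply (i j k : Fin M) :
    Evec i j k = (if j = i then (1:ℝ) else 0) + (if k = i then (1:ℝ) else 0) := by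
  simp [Evec, vecMulVec, Pi.single_apply]

lemma Amat_apply (Ct : Matrix (Fin M) (Fin M) ℝ) (a : Fin M → ℝ) (j k : Fin M) :
    Amat Ct a j k = Ct j k + a j + a k := by
  simp [Amat, vecMulVec]

lemma Amat_update (Ct : Matrix (Fin M) (Fin M) ℝ) (α : Fin M → ℝ) (i : Fin M) (t : ℝ) :
    Amat Ct (Function.update α i t) = Amat Ct α + (t - α i) • Evec i := by
  ext j k
  simp only [Matrix.add_apply, Matrix.smul_apply, Amat_apply, Evec_apply,
    Function.update_apply, smul_eq_mul]
  split_ifs <;> subst_vars <;> ring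

lemma Amat_symm {Ct : Matrix (Fin M) (Fin M) ℝ} (hs : Ctᵀ = Ct) (α : Fin M → ℝ) :
    (Amat Ct α)ᵀ = Amat Ct α := by
  ext j k
  have h : Ct k j = Ct j k := by
    conv_rhs => rw [← hs, Matrix.transpose_apply]
  rw [Matrix.transpose_apply, Amat_apply, Amat_apply, h]
  ring

lemma Binv_symm {Ct : Matrix (Fin M) (Fin M) ℝ} (hs : Ctᵀ = Ct) (α : Fin M → ℝ) :
    ((Amat Ct α)⁻¹)ᵀ = (Amat Ct α)⁻¹ := by
  rw [Matrix.transpose_nonsing_inv, Amat_symm hs]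

/-- row sums of the inverse -/
noncomputable def xrow (Ct : Matrix (Fin M) (Fin M) ℝ) (i : Fin M) (a : Fin M → ℝ) : ℝ :=
  ∑ k, (Amat Ct a)⁻¹ i k

/-- total sum of entries of the inverse -/
noncomputable def pf (Ct : Matrix (Fin M) (Fin M) ℝ) (a : Fin M → ℝ) : ℝ :=
  ∑ j, ∑ k, (Amat Ct a)⁻¹ j k

lemma pf_eq (Ct : Matrix (Fin M) (Fin M) ℝ) (a : Fin M → ℝ) :
    (1 : Fin M → ℝ) ⬝ᵥ ((Amat Ct a)⁻¹ *ᵥ (1 : Fin M → ℝ)) = pf Ct a := by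
  simp [pf, dotProduct, Matrix.mulVec, Finset.mul_sum]

lemma vfun_eq (Ct : Matrix (Fin M) (Fin M) ℝ) (a : Fin M → ℝ) :
    vfun Ct a = 1 / pf Ct a := by rw [vfun, pf_eq]

noncomputable def entryCLM (j k : Fin M) : Matrix (Fin M) (Fin M) ℝ →L[ℝ] ℝ :=
  LinearMap.toContinuousLinearMap
    { toFun := fun X => X j k
      map_add' := fun _ _ => rfl
      map_smul' := fun _ _ => rfl }

lemma hasDerivAt_Amat (Ct : Matrix (Fin M) (Fin M) ℝ) (α : Fin M → ℝ) (i : Fin M) :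
    HasDerivAt (fun t => Amat Ct (Function.update α i t)) (Evec i) (α i) := by
  have h : HasDerivAt (fun t : ℝ => Amat Ct α + (t - α i) • Evec i) (Evec i) (α i) := by
    have h' := (((hasDerivAt_id (α i)).sub_const (α i)).smul_const (Evec i)).const_add
      (Amat Ct α)
    rw [one_smul] at h'
    exact h'
  exact h.congr_of_eventuallyEq (by filter_upwards with t; rw [Amat_update])

lemma hasDerivAt_entry {Ct : Matrix (Fin M) (Fin M) ℝ} {α : Fin M → ℝ}
    (hu : IsUnit (Amat Ct α)) (i j k : Fin M) :
    HasDerivAt (fun t => (Amat Ct (Function.update α i t))⁻¹ j k)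
      (-(((Amat Ct α)⁻¹ * Evec i * (Amat Ct α)⁻¹) j k)) (α i) := by
  set A := Amat Ct α with hA
  have hinv : HasFDerivAt Ring.inverse (-ContinuousLinearMap.mulLeftRight ℝ _ A⁻¹ A⁻¹) A := by
    have h := hasFDerivAt_ringInverse (𝕜 := ℝ) hu.unit
    have e : (↑hu.unit⁻¹ : Matrix (Fin M) (Fin M) ℝ) = A⁻¹ := by
      rw [Matrix.nonsing_inv_eq_ringInverse, ← Ring.inverse_unit hu.unit, hu.unit_spec]
    rw [hu.unit_spec] at h
    simp only [e] at h
    exact h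
  have hcurve := hasDerivAt_Amat Ct α i
  have h0 : Amat Ct (Function.update α i (α i)) = A := by rw [Function.update_eq_self]
  have hcomp : HasDerivAt (fun t => Ring.inverse (Amat Ct (Function.update α i t)))
      (-(A⁻¹ * Evec i * A⁻¹)) (α i) := by
    rw [← h0] at hinv
    have := hinv.comp_hasDerivAt (α i) hcurve
    simp at this
    exact this
  have heq : (fun t => Ring.inverse (Amat Ct (Function.update α i t)))
      = fun t => (Amat Ct (Function.update α i t))⁻¹ := by
    funext t; rw [Matrix.nonsing_inv_eq_ringInverse]
  rw [heq] at hcomp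
  have := (entryCLM j k).hasFDerivAt.comp_hasDerivAt (α i) hcomp
  simp [entryCLM] at this
  exact this

lemma BEB_apply (B : Matrix (Fin M) (Fin M) ℝ) (i j k : Fin M) :
    (B * Evec i * B) j k = B j i * (∑ m, B m k) + (∑ l, B j l) * B i k := by
  have h1 : ∀ m, (B * Evec i) j m = B j i + (if m = i then (∑ l, B j l) else 0) := by
    intro m
    simp only [Matrix.mul_apply, Evec_apply, mul_add, Finset.sum_add_distrib, mul_ite,
      mul_one, mul_zero]
    rw [Finset.sum_ite_eq' Finset.univ i (fun l => B j l)]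
    simp [Finset.sum_ite]
  rw [Matrix.mul_apply]
  calc ∑ m, (B * Evec i) j m * B m k
      = ∑ m, (B j i * B m k + (if m = i then (∑ l, B j l) * B m k else 0)) := by
        refine Finset.sum_congr rfl fun m _ => ?_
        rw [h1 m]; split_ifs <;> ring
    _ = B j i * (∑ m, B m k) + (∑ l, B j l) * B i k := by
        rw [Finset.sum_add_distrib, ← Finset.mul_sum,
          Finset.sum_ite_eq' Finset.univ i (fun m => (∑ l, B j l) * B m k)]
        simp

lemma row_BEB {B : Matrix (Fin M) (Fin M) ℝ} (hB : Bᵀ = B) (i : Fin M) :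
    ∑ k, (B * Evec i * B) i k
      = B i i * (∑ j, ∑ k, B j k) + (∑ k, B i k)^2 := by
  have tot : ∑ k : Fin M, ∑ m, B m k = ∑ j, ∑ k, B j k := Finset.sum_comm
  simp only [BEB_apply]
  rw [Finset.sum_add_distrib, ← Finset.mul_sum, ← Finset.mul_sum, tot]
  ring

lemma sum_BEB {B : Matrix (Fin M) (Fin M) ℝ} (hB : Bᵀ = B) (i : Fin M) :
    ∑ j, ∑ k, (B * Evec i * B) j k
      = 2 * (∑ j, ∑ k, B j k) * (∑ k, B i k) := by
  have hsym : ∀ a b, B a b = B b a := fun a b => by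
    conv_lhs => rw [← hB, Matrix.transpose_apply]
  have tot : ∑ k : Fin M, ∑ m, B m k = ∑ j, ∑ k, B j k := Finset.sum_comm
  have coli : ∑ j, B j i = ∑ k, B i k := Finset.sum_congr rfl fun j _ => hsym j i
  simp only [BEB_apply]
  calc ∑ j, ∑ k, (B j i * (∑ m, B m k) + (∑ l, B j l) * B i k)
      = ∑ j, (B j i * (∑ k, ∑ m, B m k) + (∑ l, B j l) * (∑ k, B i k)) := by
        refine Finset.sum_congr rfl fun j _ => ?_
        rw [Finset.sum_add_distrib, ← Finset.mul_sum, ← Finset.mul_sum]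
    _ = (∑ j, B j i) * (∑ k, ∑ m, B m k) + (∑ j, ∑ l, B j l) * (∑ k, B i k) := by
        rw [Finset.sum_add_distrib, ← Finset.sum_mul, ← Finset.sum_mul]
    _ = 2 * (∑ j, ∑ k, B j k) * (∑ k, B i k) := by rw [tot, coli]; ring

variable {Ct : Matrix (Fin M) (Fin M) ℝ}

lemma hasDerivAt_xrow (hs : Ctᵀ = Ct) {α : Fin M → ℝ} (hu : IsUnit (Amat Ct α)) (i : Fin M) :
    HasDerivAt (fun t => xrow Ct i (Function.update α i t))
      (-((Amat Ct α)⁻¹ i i * pf Ct α + (xrow Ct i α)^2)) (α i) := by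
  have h := HasDerivAt.fun_sum (u := Finset.univ) (fun k _ => hasDerivAt_entry hu i i k)
  have e : (∑ k : Fin M, -(((Amat Ct α)⁻¹ * Evec i * (Amat Ct α)⁻¹) i k))
      = -((Amat Ct α)⁻¹ i i * pf Ct α + (xrow Ct i α)^2) := by
    rw [Finset.sum_neg_distrib, row_BEB (Binv_symm hs α) i]
    rfl
  rw [← e]
  exact h

lemma hasDerivAt_pf (hs : Ctᵀ = Ct) {α : Fin M → ℝ} (hu : IsUnit (Amat Ct α)) (i : Fin M) :
    HasDerivAt (fun t => pf Ct (Function.update α i t))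
      (-(2 * pf Ct α * xrow Ct i α)) (α i) := by
  have h := HasDerivAt.fun_sum (u := Finset.univ)
    (fun j _ => HasDerivAt.fun_sum (u := Finset.univ) (fun k _ => hasDerivAt_entry hu i j k))
  have e : (∑ j : Fin M, ∑ k : Fin M, -(((Amat Ct α)⁻¹ * Evec i * (Amat Ct α)⁻¹) j k))
      = -(2 * pf Ct α * xrow Ct i α) := by
    simp only [Finset.sum_neg_distrib]
    rw [sum_BEB (Binv_symm hs α) i]
    rfl
  rw [← e]
  exact h

lemma hasDerivAt_vfun (hs : Ctᵀ = Ct) {α : Fin M → ℝ} (hu : IsUnit (Amat Ct α))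
    (hp : pf Ct α ≠ 0) (i : Fin M) :
    HasDerivAt (fun t => vfun Ct (Function.update α i t))
      (2 * xrow Ct i α / pf Ct α) (α i) := by
  have hself : Function.update α i (α i) = α := Function.update_eq_self i α
  have hp' : pf Ct (Function.update α i (α i)) ≠ 0 := by rw [hself]; exact hp
  have h := ((hasDerivAt_const (α i) (1:ℝ)).div (hasDerivAt_pf hs hu i) hp')
  rw [hself] at h
  have e : (0 * pf Ct α - 1 * -(2 * pf Ct α * xrow Ct i α)) / pf Ct α ^ 2
      = 2 * xrow Ct i α / pf Ct α := by
    field_simp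
    ring
  rw [← e]
  have hfe : (fun t => vfun Ct (Function.update α i t))
      = fun t => 1 / pf Ct (Function.update α i t) := by
    funext t; rw [vfun_eq]
  rw [hfe]
  exact h

/-- derivative of `t ↦ 2 x_i / p` -/
lemma hasDerivAt_ufun (hs : Ctᵀ = Ct) {α : Fin M → ℝ} (hu : IsUnit (Amat Ct α))
    (hp : pf Ct α ≠ 0) (i : Fin M) :
    HasDerivAt (fun t => 2 * xrow Ct i (Function.update α i t) / pf Ct (Function.update α i t))
      (-2 * (Amat Ct α)⁻¹ i i + 2 * (xrow Ct i α)^2 / pf Ct α) (α i) := by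
  have hself : Function.update α i (α i) = α := Function.update_eq_self i α
  have hp' : pf Ct (Function.update α i (α i)) ≠ 0 := by rw [hself]; exact hp
  have h := (((hasDerivAt_xrow hs hu i).const_mul 2).div (hasDerivAt_pf hs hu i) hp')
  rw [hself] at h
  have e : (2 * -((Amat Ct α)⁻¹ i i * pf Ct α + xrow Ct i α ^ 2) * pf Ct α -
        2 * xrow Ct i α * -(2 * pf Ct α * xrow Ct i α)) / pf Ct α ^ 2
      = -2 * (Amat Ct α)⁻¹ i i + 2 * (xrow Ct i α)^2 / pf Ct α := by
    field_simp
    ring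
  rw [← e]
  exact h

lemma frob_eq (Ct : Matrix (Fin M) (Fin M) ℝ) (a : Fin M → ℝ) :
    frobSq (Cmat Ct a) = ∑ j, ∑ k, (Amat Ct a j k - vfun Ct a)^2 := by
  simp [frobSq, Cmat, Matrix.sub_apply, Matrix.smul_apply, vecMulVec, smul_eq_mul]

/-- the first derivative of `frobSq ∘ Cmat` along coordinate `i`, as a function of `a` -/
noncomputable def Gfun (Ct : Matrix (Fin M) (Fin M) ℝ) (i : Fin M) (a : Fin M → ℝ) : ℝ :=
  ∑ j, ∑ k, 2 * (Amat Ct a j k - vfun Ct a) *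
    (Evec i j k - 2 * xrow Ct i a / pf Ct a)

lemma hasDerivAt_Aentry {α : Fin M → ℝ} (i j k : Fin M) :
    HasDerivAt (fun t => Amat Ct (Function.update α i t) j k) (Evec i j k) (α i) := by
  have := (entryCLM j k).hasFDerivAt.comp_hasDerivAt (α i) (hasDerivAt_Amat Ct α i)
  simp [entryCLM] at this
  exact this

lemma hasDerivAt_frob (hs : Ctᵀ = Ct) {α : Fin M → ℝ} (hu : IsUnit (Amat Ct α))
    (hp : pf Ct α ≠ 0) (i : Fin M) :
    HasDerivAt (fun t => frobSq (Cmat Ct (Function.update α i t)))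
      (Gfun Ct i α) (α i) := by
  have hfe : (fun t => frobSq (Cmat Ct (Function.update α i t)))
      = fun t => ∑ j, ∑ k, (Amat Ct (Function.update α i t) j k
          - vfun Ct (Function.update α i t))^2 := by
    funext t; rw [frob_eq]
  rw [hfe]
  have h := HasDerivAt.fun_sum (u := Finset.univ) (fun j _ =>
    HasDerivAt.fun_sum (u := Finset.univ) (fun k _ => by
      have h1 := (hasDerivAt_Aentry (Ct := Ct) (α := α) i j k).fun_sub (hasDerivAt_vfun hs hu hp i)
      exact h1.fun_pow 2))
  have e : (∑ j : Fin M, ∑ k : Fin M, (2:ℕ) * (Amat Ct α j k - vfun Ct α) ^ (2-1) *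
        (Evec i j k - 2 * xrow Ct i α / pf Ct α)) = Gfun Ct i α := by
    refine Finset.sum_congr rfl fun j _ => Finset.sum_congr rfl fun k _ => ?_
    push_cast
    ring
  simp only [Function.update_eq_self] at h
  rw [← e]
  exact h

/-- second derivative value -/
noncomputable def D2 (Ct : Matrix (Fin M) (Fin M) ℝ) (i : Fin M) (α : Fin M → ℝ) : ℝ :=
  ∑ j, ∑ k, (2 * ((Evec i j k - 2 * xrow Ct i α / pf Ct α)^2
      + (Amat Ct α j k - vfun Ct α)
        * (2 * (Amat Ct α)⁻¹ i i - 2 * (xrow Ct i α)^2 / pf Ct α)))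

set_option maxHeartbeats 1000000 in
lemma hasDerivAt_Gfun (hs : Ctᵀ = Ct) {α : Fin M → ℝ} (hu : IsUnit (Amat Ct α))
    (hp : pf Ct α ≠ 0) (i : Fin M) :
    HasDerivAt (fun t => Gfun Ct i (Function.update α i t)) (D2 Ct i α) (α i) := by
  have h := HasDerivAt.fun_sum (u := Finset.univ) (fun j _ =>
    HasDerivAt.fun_sum (u := Finset.univ) (fun k _ => by
      have h1 := ((hasDerivAt_Aentry (Ct := Ct) (α := α) i j k).fun_sub
        (hasDerivAt_vfun hs hu hp i)).const_mul 2
      have h2 := (hasDerivAt_const (α i) (Evec i j k)).fun_sub (hasDerivAt_ufun hs hu hp i)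
      exact h1.fun_mul h2))
  simp only [Function.update_eq_self] at h
  have e : (∑ j : Fin M, ∑ k : Fin M,
        (2 * (Evec i j k - 2 * xrow Ct i α / pf Ct α) *
            (Evec i j k - 2 * xrow Ct i α / pf Ct α) +
          2 * (Amat Ct α j k - vfun Ct α) *
            (0 - (-2 * (Amat Ct α)⁻¹ i i + 2 * xrow Ct i α ^ 2 / pf Ct α))))
      = D2 Ct i α := by
    refine Finset.sum_congr rfl fun j _ => Finset.sum_congr rfl fun k _ => ?_
    ring
  rw [← e]
  exact h

lemma eventually_good (hs : Ctᵀ = Ct) {α : Fin M → ℝ} (hA : (Amat Ct α).PosDef)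
    (hp : pf Ct α ≠ 0) (i : Fin M) :
    ∀ᶠ t in 𝓝 (α i), IsUnit (Amat Ct (Function.update α i t))
      ∧ pf Ct (Function.update α i t) ≠ 0 := by
  have hAc : Continuous fun t : ℝ => Amat Ct (Function.update α i t) := by
    have : (fun t : ℝ => Amat Ct (Function.update α i t))
        = fun t => Amat Ct α + (t - α i) • Evec i := by
      funext t; rw [Amat_update]
    rw [this]
    exact continuous_const.add ((continuous_id.sub continuous_const).smul continuous_const)
  have hdet : Continuous fun t : ℝ => (Amat Ct (Function.update α i t)).det :=
    hAc.matrix_det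
  have hdet0 : (fun t : ℝ => (Amat Ct (Function.update α i t)).det) (α i) ≠ 0 := by
    simp only [Function.update_eq_self]
    exact hA.det_pos.ne'
  have h1 := hdet.continuousAt.eventually_ne hdet0
  have hpc : ContinuousAt (fun t => pf Ct (Function.update α i t)) (α i) :=
    (hasDerivAt_pf hs hA.isUnit i).continuousAt
  have hp0 : (fun t => pf Ct (Function.update α i t)) (α i) ≠ 0 := by
    simp only [Function.update_eq_self]; exact hp
  have h2 := hpc.eventually_ne hp0
  filter_upwards [h1, h2] with t ht1 ht2
  exact ⟨(Matrix.isUnit_iff_isUnit_det _).2 (isUnit_iff_ne_zero.2 ht1), ht2⟩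

lemma pd_pd_eq (hs : Ctᵀ = Ct) {α : Fin M → ℝ} (hA : (Amat Ct α).PosDef)
    (hp : pf Ct α ≠ 0) (i : Fin M) :
    pd (pd (fun a => frobSq (Cmat Ct a)) i) i α = D2 Ct i α := by
  have keyfun : (fun t => pd (fun a => frobSq (Cmat Ct a)) i (Function.update α i t))
      = deriv (fun t => frobSq (Cmat Ct (Function.update α i t))) := by
    funext t
    show deriv (fun s => frobSq (Cmat Ct
      (Function.update (Function.update α i t) i s))) ((Function.update α i t) i) = _
    simp only [Function.update_idem, Function.update_self]
  have hev := eventually_good hs hA hp i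
  have heq : deriv (fun t => frobSq (Cmat Ct (Function.update α i t)))
      =ᶠ[𝓝 (α i)] (fun t => Gfun Ct i (Function.update α i t)) := by
    filter_upwards [hev] with t ht
    have h := hasDerivAt_frob hs ht.1 ht.2 i
    simp only [Function.update_idem, Function.update_self] at h
    exact h.deriv
  have h2 : HasDerivAt (fun t => Gfun Ct i (Function.update α i t)) (D2 Ct i α) (α i) :=
    hasDerivAt_Gfun hs hA.isUnit hp i
  have h3 : HasDerivAt (deriv (fun t => frobSq (Cmat Ct (Function.update α i t))))
      (D2 Ct i α) (α i) := h2.congr_of_eventuallyEq heq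
  show deriv (fun t => pd (fun a => frobSq (Cmat Ct a)) i (Function.update α i t)) (α i) = _
  rw [keyfun]
  exact h3.deriv

lemma sum_ite_fun (i : Fin M) (f : ℝ → ℝ) :
    ∑ j : Fin M, f (if j = i then (1:ℝ) else 0) = M * f 0 + (f 1 - f 0) := by
  have h : ∀ j : Fin M, f (if j = i then (1:ℝ) else 0)
      = f 0 + (if j = i then f 1 - f 0 else 0) := fun j => by split_ifs with h <;> simp
  simp only [h, Finset.sum_add_distrib, Finset.sum_const, Finset.card_univ, Fintype.card_fin,
    nsmul_eq_mul, Finset.sum_ite_eq' Finset.univ i, Finset.mem_univ, if_true]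

lemma sum_sq_E (i : Fin M) (u : ℝ) :
    ∑ j : Fin M, ∑ k : Fin M, (Evec i j k - u)^2
      = 2*(M:ℝ) + 2 - 4*M*u + M^2*u^2 := by
  have h1 : ∀ j : Fin M, ∑ k : Fin M, (Evec i j k - u)^2
      = (M:ℝ) * ((if j = i then (1:ℝ) else 0) + 0 - u)^2
        + (((if j = i then (1:ℝ) else 0) + 1 - u)^2
          - ((if j = i then (1:ℝ) else 0) + 0 - u)^2) := by
    intro j
    have h2 := sum_ite_fun i (fun b => ((if j = i then (1:ℝ) else 0) + b - u)^2)
    simp only [Evec_apply]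
    exact h2
  rw [Finset.sum_congr rfl (fun j _ => h1 j)]
  rw [sum_ite_fun i (fun b => (M:ℝ) * ((b + 0 - u)^2)
    + ((b + 1 - u)^2 - (b + 0 - u)^2))]
  ring

lemma D2_eq (hs : Ctᵀ = Ct) {α : Fin M → ℝ} (hp : pf Ct α ≠ 0) (i : Fin M) :
    D2 Ct i α
      = (4*(M:ℝ) + 4) + (-16*(M:ℝ)/pf Ct α) * xrow Ct i α
        + (8*(M:ℝ)^2/(pf Ct α)^2
            - 4*((∑ j, ∑ k, Amat Ct α j k) - (M:ℝ)^2 * vfun Ct α)/pf Ct α)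
              * (xrow Ct i α)^2
        + (4*((∑ j, ∑ k, Amat Ct α j k) - (M:ℝ)^2 * vfun Ct α)) * (Amat Ct α)⁻¹ i i := by
  have split : D2 Ct i α
      = 2 * (∑ j, ∑ k, (Evec i j k - 2 * xrow Ct i α / pf Ct α)^2)
        + 2 * (2 * (Amat Ct α)⁻¹ i i - 2 * (xrow Ct i α)^2 / pf Ct α)
          * (∑ j, ∑ k, (Amat Ct α j k - vfun Ct α)) := by
    rw [D2, Finset.mul_sum, Finset.mul_sum]
    rw [← Finset.sum_add_distrib]
    refine Finset.sum_congr rfl fun j _ => ?_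
    rw [Finset.mul_sum, Finset.mul_sum, ← Finset.sum_add_distrib]
    refine Finset.sum_congr rfl fun k _ => ?_
    ring
  have sumA : (∑ j, ∑ k, (Amat Ct α j k - vfun Ct α))
      = (∑ j, ∑ k, Amat Ct α j k) - (M:ℝ)^2 * vfun Ct α := by
    simp only [Finset.sum_sub_distrib, Finset.sum_const, Finset.card_univ, Fintype.card_fin,
      nsmul_eq_mul]
    push_cast
    ring
  rw [split, sum_sq_E, sumA]
  field_simp
  ring

lemma pf_eq_sum_xrow (Ct : Matrix (Fin M) (Fin M) ℝ) (α : Fin M → ℝ) :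
    pf Ct α = ∑ i, xrow Ct i α := rfl

lemma dot_symm {A : Matrix (Fin M) (Fin M) ℝ} (hAs : Aᵀ = A) (u w : Fin M → ℝ) :
    u ⬝ᵥ (A *ᵥ w) = w ⬝ᵥ (A *ᵥ u) := by
  have hsym : ∀ a b, A a b = A b a := fun a b => by
    conv_lhs => rw [← hAs, Matrix.transpose_apply]
  simp only [dotProduct, Matrix.mulVec, Finset.mul_sum]
  rw [Finset.sum_comm]
  refine Finset.sum_congr rfl fun j _ => Finset.sum_congr rfl fun k _ => ?_
  rw [hsym j k]; ring

lemma mulVec_one_apply (A : Matrix (Fin M) (Fin M) ℝ) (i : Fin M) :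
    (A *ᵥ (1 : Fin M → ℝ)) i = ∑ k, A i k := by
  simp [Matrix.mulVec, dotProduct]

lemma sumBB (hs : Ctᵀ = Ct) (α : Fin M → ℝ) :
    (1 : Fin M → ℝ) ⬝ᵥ (((Amat Ct α)⁻¹ * (Amat Ct α)⁻¹) *ᵥ (1 : Fin M → ℝ))
      = ∑ l, (xrow Ct l α)^2 := by
  have hsym : ∀ a b, (Amat Ct α)⁻¹ a b = (Amat Ct α)⁻¹ b a := fun a b => by
    conv_lhs => rw [← Binv_symm hs α, Matrix.transpose_apply]
  have h1 : (1 : Fin M → ℝ) ⬝ᵥ (((Amat Ct α)⁻¹ * (Amat Ct α)⁻¹) *ᵥ (1 : Fin M → ℝ))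
      = ∑ j, ∑ k, ∑ l, (Amat Ct α)⁻¹ j l * (Amat Ct α)⁻¹ l k := by
    simp [dotProduct, Matrix.mulVec, Matrix.mul_apply, Finset.mul_sum]
  rw [h1]
  calc ∑ j, ∑ k, ∑ l, (Amat Ct α)⁻¹ j l * (Amat Ct α)⁻¹ l k
      = ∑ j, ∑ l, ∑ k, (Amat Ct α)⁻¹ j l * (Amat Ct α)⁻¹ l k :=
        Finset.sum_congr rfl fun j _ => Finset.sum_comm
    _ = ∑ l, ∑ j, ∑ k, (Amat Ct α)⁻¹ j l * (Amat Ct α)⁻¹ l k := Finset.sum_comm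
    _ = ∑ l, (∑ j, (Amat Ct α)⁻¹ j l) * (∑ k, (Amat Ct α)⁻¹ l k) := by
        refine Finset.sum_congr rfl fun l _ => ?_
        rw [Finset.sum_mul_sum]
    _ = ∑ l, (xrow Ct l α)^2 := by
        refine Finset.sum_congr rfl fun l _ => ?_
        rw [show (∑ j, (Amat Ct α)⁻¹ j l) = ∑ j, (Amat Ct α)⁻¹ l j from
          Finset.sum_congr rfl fun j _ => hsym j l]
        rw [sq]
        rfl

lemma trace_eq_sum_diag (A : Matrix (Fin M) (Fin M) ℝ) : A.trace = ∑ i, A i i := rfl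

lemma q_eq (Ct : Matrix (Fin M) (Fin M) ℝ) {α : Fin M → ℝ} (ha : ∑ i, α i = 0) :
    ∑ j, ∑ k, Amat Ct α j k = (1 : Fin M → ℝ) ⬝ᵥ (Ct *ᵥ (1 : Fin M → ℝ)) := by
  have h1 : (1 : Fin M → ℝ) ⬝ᵥ (Ct *ᵥ (1 : Fin M → ℝ)) = ∑ j, ∑ k, Ct j k := by
    simp [dotProduct, Matrix.mulVec, Finset.mul_sum]
  rw [h1]
  simp only [Amat_apply, Finset.sum_add_distrib, Finset.sum_const, Finset.card_univ,
    Fintype.card_fin, nsmul_eq_mul, ha, mul_zero, add_zero]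
  rw [← Finset.mul_sum, ha, mul_zero, add_zero]

lemma one_ne_zero_vec (hM : 0 < M) : (1 : Fin M → ℝ) ≠ 0 := by
  intro h
  have := congrFun h ⟨0, hM⟩
  simpa using this

lemma pf_pos {α : Fin M → ℝ} (hA : (Amat Ct α).PosDef) (hM : 0 < M) : 0 < pf Ct α := by
  have h := hA.inv.re_dotProduct_pos (one_ne_zero_vec hM)
  rw [← pf_eq]
  simpa using h

lemma q_pos (hCt : Ct.PosDef) (hM : 0 < M) :
    0 < (1 : Fin M → ℝ) ⬝ᵥ (Ct *ᵥ (1 : Fin M → ℝ)) := by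
  have h := hCt.re_dotProduct_pos (one_ne_zero_vec hM)
  simpa using h

lemma cs_xrow (Ct : Matrix (Fin M) (Fin M) ℝ) (α : Fin M → ℝ) :
    (pf Ct α)^2 ≤ (M:ℝ) * ∑ i, (xrow Ct i α)^2 := by
  rw [pf_eq_sum_xrow]
  have h := Finset.sum_mul_sq_le_sq_mul_sq Finset.univ (fun _ : Fin M => (1:ℝ))
    (fun i => xrow Ct i α)
  simpa [Finset.card_univ] using h

lemma tr_ineq (hs : Ctᵀ = Ct) {α : Fin M → ℝ} (hA : (Amat Ct α).PosDef) :
    ∑ i, (xrow Ct i α)^2 ≤ (∑ i, (Amat Ct α)⁻¹ i i) * pf Ct α := by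
  obtain ⟨L, hL⟩ : ∃ L : Matrix (Fin M) (Fin M) ℝ, (Amat Ct α)⁻¹ = Lᴴ * L := by
    open MatrixOrder in
    exact ⟨CFC.sqrt (Amat Ct α)⁻¹, by
      rw [(CFC.sqrt_nonneg (Amat Ct α)⁻¹).posSemidef.isHermitian.eq,
        CFC.sqrt_mul_sqrt_self _ hA.inv.posSemidef.nonneg]⟩
  have hLt : Lᴴ = Lᵀ := by
    ext a b; simp [Matrix.conjTranspose_apply]
  rw [hLt] at hL
  -- y j = ∑ k, L j k
  set y : Fin M → ℝ := fun j => ∑ k, L j k with hy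
  have hx : ∀ i, xrow Ct i α = ∑ j, L j i * y j := by
    intro i
    rw [xrow]
    calc ∑ k, (Amat Ct α)⁻¹ i k = ∑ k, ∑ j, L j i * L j k := by
          refine Finset.sum_congr rfl fun k _ => ?_
          rw [hL, Matrix.mul_apply]
          exact Finset.sum_congr rfl fun j _ => by rw [Matrix.transpose_apply]
      _ = ∑ j, L j i * y j := by
          rw [Finset.sum_comm]
          exact Finset.sum_congr rfl fun j _ => by rw [hy, Finset.mul_sum]
  have hpf : pf Ct α = ∑ j, (y j)^2 := by
    rw [pf_eq_sum_xrow]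
    calc ∑ i, xrow Ct i α = ∑ i, ∑ j, L j i * y j := Finset.sum_congr rfl fun i _ => hx i
      _ = ∑ j, (y j)^2 := by
          rw [Finset.sum_comm]
          refine Finset.sum_congr rfl fun j _ => ?_
          rw [← Finset.sum_mul, sq]
  have htr : ∑ i, (Amat Ct α)⁻¹ i i = ∑ i, ∑ j, (L j i)^2 := by
    refine Finset.sum_congr rfl fun i _ => ?_
    rw [hL, Matrix.mul_apply]
    exact Finset.sum_congr rfl fun j _ => by rw [Matrix.transpose_apply, sq]
  calc ∑ i, (xrow Ct i α)^2 = ∑ i, (∑ j, L j i * y j)^2 := by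
        exact Finset.sum_congr rfl fun i _ => by rw [hx i]
    _ ≤ ∑ i, (∑ j, (L j i)^2) * (∑ j, (y j)^2) := by
        refine Finset.sum_le_sum fun i _ => ?_
        exact Finset.sum_mul_sq_le_sq_mul_sq Finset.univ (fun j => L j i) y
    _ = (∑ i, (Amat Ct α)⁻¹ i i) * pf Ct α := by
        rw [← Finset.sum_mul, htr, hpf]

lemma q_ineq (hs : Ctᵀ = Ct) {α : Fin M → ℝ} (hA : (Amat Ct α).PosDef) (hM : 0 < M) :
    (M:ℝ)^2 ≤ (∑ j, ∑ k, Amat Ct α j k) * pf Ct α := by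
  set A := Amat Ct α with hAdef
  set y : Fin M → ℝ := A⁻¹ *ᵥ (1 : Fin M → ℝ) with hy
  have hp := pf_pos hA hM
  set lam : ℝ := (M:ℝ) / pf Ct α with hlam
  have hAy : A *ᵥ y = 1 := by
    rw [hy, Matrix.mulVec_mulVec, Matrix.mul_nonsing_inv _ hA.det_pos.ne'.isUnit,
      Matrix.one_mulVec]
  have hAs : Aᵀ = A := Amat_symm hs α
  have h11 : (1 : Fin M → ℝ) ⬝ᵥ (A *ᵥ (1 : Fin M → ℝ)) = ∑ j, ∑ k, A j k := by
    simp [dotProduct, Matrix.mulVec, Finset.mul_sum]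
  have h1y : (1 : Fin M → ℝ) ⬝ᵥ y = pf Ct α := by
    rw [hy, pf_eq]
  have hy1 : y ⬝ᵥ (A *ᵥ (1 : Fin M → ℝ)) = (M:ℝ) := by
    rw [dot_symm hAs, hAy]
    simp [dotProduct]
  have hyy : y ⬝ᵥ (A *ᵥ y) = pf Ct α := by
    rw [hAy, dotProduct_comm, h1y]
  have h1Ay : (1 : Fin M → ℝ) ⬝ᵥ (A *ᵥ y) = (M:ℝ) := by
    rw [hAy]
    simp [dotProduct]
  have h0 := hA.posSemidef.re_dotProduct_nonneg ((1 : Fin M → ℝ) - lam • y)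
  simp only [star_trivial, RCLike.re_to_real] at h0
  have expand : ((1 : Fin M → ℝ) - lam • y) ⬝ᵥ (A *ᵥ ((1 : Fin M → ℝ) - lam • y))
      = (∑ j, ∑ k, A j k) - 2 * lam * (M:ℝ) + lam^2 * pf Ct α := by
    rw [Matrix.mulVec_sub, Matrix.mulVec_smul, sub_dotProduct, smul_dotProduct,
      dotProduct_sub, dotProduct_sub, dotProduct_smul,
      dotProduct_smul, h11, h1Ay, hy1, hyy]
    simp only [smul_eq_mul]
    ring
  rw [expand] at h0
  rw [hlam] at h0
  have h2 : 0 ≤ (∑ j, ∑ k, A j k) - (M:ℝ)^2 / pf Ct α := by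
    have : (∑ j, ∑ k, A j k) - 2 * ((M:ℝ) / pf Ct α) * (M:ℝ)
        + ((M:ℝ) / pf Ct α)^2 * pf Ct α = (∑ j, ∑ k, A j k) - (M:ℝ)^2 / pf Ct α := by
      field_simp
      ring
    linarith [this ▸ h0]
  have h3 : (M:ℝ)^2 / pf Ct α ≤ ∑ j, ∑ k, A j k := by linarith
  calc (M:ℝ)^2 = ((M:ℝ)^2 / pf Ct α) * pf Ct α := by field_simp
    _ ≤ (∑ j, ∑ k, A j k) * pf Ct α := by
        exact mul_le_mul_of_nonneg_right h3 hp.le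

end CShift

open CShift

/-- Convexity of the C-SHIFT energy (Theorem 1): on the hyperplane `Σαᵢ = 0`, the Laplacian
of `α ↦ ‖C_α‖_F²` satisfies
`(1/4)Δ‖C_α‖_F² = M²(1 − v(α)Tr(A_α⁻¹)) + c(Tr(A_α⁻¹) − v(α)·1ᵀA_α⁻²1)
  + 3M(M·v(α)²·1ᵀA_α⁻²1 − 1)` with `c = 1ᵀC̃1`, and is nonnegative. -/
theorem laplacian_frobSq_nonneg {M : ℕ} (Ct : Matrix (Fin M) (Fin M) ℝ) (hCt : Ct.PosDef)
    (α : Fin M → ℝ) (hA : (Amat Ct α).PosDef) (ha : ∑ i, α i = 0) :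
    (∑ i, pd (pd (fun a => frobSq (Cmat Ct a)) i) i α)
        = 4 * ((M : ℝ) ^ 2 * (1 - vfun Ct α * ((Amat Ct α)⁻¹).trace)
            + ((1 : Fin M → ℝ) ⬝ᵥ (Ct *ᵥ (1 : Fin M → ℝ)))
                * (((Amat Ct α)⁻¹).trace
                  - vfun Ct α
                      * ((1 : Fin M → ℝ) ⬝ᵥ (((Amat Ct α)⁻¹ * (Amat Ct α)⁻¹)
                          *ᵥ (1 : Fin M → ℝ))))
            + 3 * (M : ℝ)
                * ((M : ℝ) * (vfun Ct α) ^ 2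
                    * ((1 : Fin M → ℝ) ⬝ᵥ (((Amat Ct α)⁻¹ * (Amat Ct α)⁻¹)
                        *ᵥ (1 : Fin M → ℝ))) - 1))
      ∧ 0 ≤ ∑ i, pd (pd (fun a => frobSq (Cmat Ct a)) i) i α := by
  rcases Nat.eq_zero_or_pos M with hM0 | hM
  · subst hM0
    constructor
    · simp [dotProduct]
    · simp
  -- symmetry of Ct
  have hs : Ctᵀ = Ct := by
    ext a b
    conv_rhs => rw [← hCt.isHermitian.eq]
    simp [Matrix.conjTranspose_apply]
  have hp0 : 0 < pf Ct α := pf_pos hA hM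
  have hp : pf Ct α ≠ 0 := hp0.ne'
  have hL : (∑ i, pd (pd (fun a => frobSq (Cmat Ct a)) i) i α) = ∑ i, D2 Ct i α :=
    Finset.sum_congr rfl fun i _ => pd_pd_eq hs hA hp i
  -- abbreviations
  set p : ℝ := pf Ct α with hpdef
  set w : ℝ := ∑ i, (xrow Ct i α)^2 with hwdef
  set tr : ℝ := ∑ i, (Amat Ct α)⁻¹ i i with htrdef
  set q : ℝ := ∑ j, ∑ k, Amat Ct α j k with hqdef
  -- closed form for the sum of D2's
  have hsum : ∑ i, D2 Ct i α
      = (M:ℝ) * (4*(M:ℝ) + 4) + (-16*(M:ℝ)/p) * p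
        + (8*(M:ℝ)^2/p^2 - 4*(q - (M:ℝ)^2 * vfun Ct α)/p) * w
        + (4*(q - (M:ℝ)^2 * vfun Ct α)) * tr := by
    rw [Finset.sum_congr rfl fun i _ => D2_eq hs hp i]
    rw [Finset.sum_add_distrib, Finset.sum_add_distrib, Finset.sum_add_distrib,
      Finset.sum_const, ← Finset.mul_sum, ← Finset.mul_sum, ← Finset.mul_sum,
      ← pf_eq_sum_xrow]
    simp only [Finset.card_univ, Fintype.card_fin, nsmul_eq_mul]
    rfl
  have hvp : vfun Ct α = 1 / p := vfun_eq Ct α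
  -- numerator form
  set Nnum : ℝ := (M:ℝ)^2*(p^2 - p*tr) + q*(tr*p^2 - w*p) + 3*(M:ℝ)*((M:ℝ)*w - p^2)
    with hNdef
  have e2 : ∑ i, D2 Ct i α = 4*Nnum/p^2 := by
    rw [hsum, hvp, hNdef]
    field_simp
    ring
  -- inequalities
  have hq0 : 0 < q := by rw [hqdef, q_eq Ct ha]; exact q_pos hCt hM
  have hw0 : (0:ℝ) ≤ w := Finset.sum_nonneg fun i _ => sq_nonneg _
  have h2 : w ≤ tr * p := tr_ineq hs hA
  have h3 : (M:ℝ)^2 ≤ q * p := q_ineq hs hA hM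
  have h4 : p^2 ≤ (M:ℝ) * w := cs_xrow Ct α
  have hM1 : (1:ℝ) ≤ (M:ℝ) := by exact_mod_cast hM
  have hNsplit : Nnum = (q*p - (M:ℝ)^2)*(tr*p - w) + (2*(M:ℝ)^2*w - 2*(M:ℝ)*p^2)
      + ((M:ℝ)^2 - (M:ℝ))*p^2 := by rw [hNdef]; ring
  have hN : 0 ≤ Nnum := by
    rw [hNsplit]
    have t1 : 0 ≤ (q*p - (M:ℝ)^2)*(tr*p - w) :=
      mul_nonneg (by linarith) (by linarith)
    have t2 : 0 ≤ 2*(M:ℝ)^2*w - 2*(M:ℝ)*p^2 := by nlinarith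
    have t3 : 0 ≤ ((M:ℝ)^2 - (M:ℝ))*p^2 :=
      mul_nonneg (by nlinarith) (sq_nonneg p)
    linarith
  constructor
  · -- the equality
    rw [hL, e2, hvp, trace_eq_sum_diag, sumBB hs α, ← q_eq Ct ha, ← hwdef, ← htrdef, ← hqdef]
    field_simp
    ring
  · rw [hL, e2]
    positivity
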